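/- Let (λ, φ_λ) be a left coaction of a quasi-Hopf algebra G on an algebra M, write λ(m) = m₍₋₁₎ ⊗ m₍₀₎, and define p_λ := φ_λ² S⁻¹(φ_λ¹ β) ⊗ φ_λ³ ∈ G ⊗ M and q_λ := S(φ̄_λ¹)α φ̄_λ² ⊗ φ̄_λ³ ∈ G ⊗ M, where φ_λ = φ_λ¹ ⊗ φ_λ² ⊗ φ_λ³ and φ_λ⁻¹ = φ̄_λ¹ ⊗ φ̄_λ² ⊗ φ̄_λ³. Then for all m ∈ M: λ(m₍₀₎)·p_λ·(S⁻¹(m₍₋₁₎) ⊗ 1_M) = p_λ·(1_G ⊗ m), and (S(m₍₋₁₎) ⊗ 1_M)·q_λ·λ(m₍₀₎) = (1_G ⊗ m)·q_λ. -/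

import Mathlib

open TensorProduct

set_option maxHeartbeats 1000000

noncomputable section

/-- A quasi-bialgebra structure (Drinfeld) on an algebra `G` over `ℂ`: algebra maps
`Δ : G → G ⊗ G` and `ε : G → ℂ`, together with an invertible reassociator
`φ ∈ G ⊗ G ⊗ G` satisfying quasi-coassociativity, the pentagon identity and the counit
axioms. -/
structure QuasiBialg (G : Type*) [Ring G] [Algebra ℂ G] where
  comul : G →ₐ[ℂ] G ⊗[ℂ] G
  counit : G →ₐ[ℂ] ℂ
  assocEl : G ⊗[ℂ] (G ⊗[ℂ] G)
  assocElInv : G ⊗[ℂ] (G ⊗[ℂ] G)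
  assocEl_mul_inv : assocEl * assocElInv = 1
  assocEl_inv_mul : assocElInv * assocEl = 1
  quasiCoassoc : ∀ a : G,
    TensorProduct.map LinearMap.id comul.toLinearMap (comul a) * assocEl =
      assocEl *
        (TensorProduct.assoc ℂ G G G)
          (TensorProduct.map comul.toLinearMap LinearMap.id (comul a))
  counit_comul_left : ∀ a : G,
    (TensorProduct.lid ℂ G)
      (TensorProduct.map counit.toLinearMap LinearMap.id (comul a)) = a
  counit_comul_right : ∀ a : G,
    (TensorProduct.rid ℂ G)
      (TensorProduct.map LinearMap.id counit.toLinearMap (comul a)) = a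
  counit_assocEl :
    TensorProduct.map LinearMap.id
        ((TensorProduct.lid ℂ G).toLinearMap ∘ₗ
          TensorProduct.map counit.toLinearMap LinearMap.id) assocEl =
      (1 : G ⊗[ℂ] G)
  pentagon :
    TensorProduct.map LinearMap.id
          (TensorProduct.map LinearMap.id comul.toLinearMap) assocEl *
        (TensorProduct.assoc ℂ G G (G ⊗[ℂ] G))
          (TensorProduct.map comul.toLinearMap LinearMap.id assocEl) =
      ((1 : G) ⊗ₜ[ℂ] assocEl) *
        TensorProduct.map LinearMap.id (TensorProduct.assoc ℂ G G G).toLinearMap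
          (TensorProduct.map LinearMap.id
            (TensorProduct.map comul.toLinearMap LinearMap.id) assocEl) *
        TensorProduct.map LinearMap.id (TensorProduct.assoc ℂ G G G).toLinearMap
          ((TensorProduct.assoc ℂ G (G ⊗[ℂ] G) G) (assocEl ⊗ₜ[ℂ] (1 : G)))

/-- A quasi-Hopf algebra structure (Drinfeld) on an algebra `G` over `ℂ`: a quasi-bialgebra
together with an invertible algebra antimorphism `S` and elements `α, β ∈ G` satisfying the
antipode axioms. -/
structure QuasiHopf (G : Type*) [Ring G] [Algebra ℂ G] extends QuasiBialg G where
  S : G →ₗ[ℂ] G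
  S_one : S 1 = 1
  S_mul : ∀ a b : G, S (a * b) = S b * S a
  Sinv : G →ₗ[ℂ] G
  Sinv_S : ∀ a : G, Sinv (S a) = a
  S_Sinv : ∀ a : G, S (Sinv a) = a
  alphaEl : G
  betaEl : G
  antipode_left : ∀ a : G,
    LinearMap.mul' ℂ G
        (TensorProduct.map (LinearMap.mulRight ℂ alphaEl ∘ₗ S) LinearMap.id (comul a)) =
      counit a • alphaEl
  antipode_right : ∀ a : G,
    LinearMap.mul' ℂ G
        (TensorProduct.map (LinearMap.mulRight ℂ betaEl) S (comul a)) =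
      counit a • betaEl
  antipode_assocEl :
    (LinearMap.mul' ℂ G ∘ₗ
        TensorProduct.map (LinearMap.mulRight ℂ betaEl)
          (LinearMap.mul' ℂ G ∘ₗ
            TensorProduct.map (LinearMap.mulRight ℂ alphaEl ∘ₗ S) LinearMap.id))
      assocEl = 1
  antipode_assocElInv :
    (LinearMap.mul' ℂ G ∘ₗ
        TensorProduct.map (LinearMap.mulRight ℂ alphaEl ∘ₗ S)
          (LinearMap.mul' ℂ G ∘ₗ
            TensorProduct.map (LinearMap.mulRight ℂ betaEl) S))
      assocElInv = 1

/-- A left coaction `(λ, φ_λ)` of a quasi-bialgebra `Q` on an algebra `M`: an algebra map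
`λ : M → G ⊗ M` with invertible reassociator `φ_λ ∈ G ⊗ G ⊗ M` satisfying the intertwining
relation, the mixed pentagon identity and the counit axioms. -/
structure LeftQCoaction (G M : Type*) [Ring G] [Algebra ℂ G] [Ring M] [Algebra ℂ M]
    (Q : QuasiBialg G) where
  lam : M →ₐ[ℂ] G ⊗[ℂ] M
  phiL : G ⊗[ℂ] (G ⊗[ℂ] M)
  phiLInv : G ⊗[ℂ] (G ⊗[ℂ] M)
  phiL_mul_inv : phiL * phiLInv = 1
  phiL_inv_mul : phiLInv * phiL = 1
  intertwine : ∀ m : M,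
    TensorProduct.map LinearMap.id lam.toLinearMap (lam m) * phiL =
      phiL *
        (TensorProduct.assoc ℂ G G M)
          (TensorProduct.map Q.comul.toLinearMap LinearMap.id (lam m))
  pentagon :
    ((1 : G) ⊗ₜ[ℂ] phiL) *
        TensorProduct.map LinearMap.id (TensorProduct.assoc ℂ G G M).toLinearMap
          (TensorProduct.map LinearMap.id
            (TensorProduct.map Q.comul.toLinearMap LinearMap.id) phiL) *
        TensorProduct.map LinearMap.id (TensorProduct.assoc ℂ G G M).toLinearMap
          ((TensorProduct.assoc ℂ G (G ⊗[ℂ] G) M) (Q.assocEl ⊗ₜ[ℂ] (1 : M))) =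
      TensorProduct.map LinearMap.id
          (TensorProduct.map LinearMap.id lam.toLinearMap) phiL *
        (TensorProduct.assoc ℂ G G (G ⊗[ℂ] M))
          (TensorProduct.map Q.comul.toLinearMap LinearMap.id phiL)
  counit_lam : ∀ m : M,
    (TensorProduct.lid ℂ M)
      (TensorProduct.map Q.counit.toLinearMap LinearMap.id (lam m)) = m
  counit_phiL_mid :
    TensorProduct.map LinearMap.id
        ((TensorProduct.lid ℂ M).toLinearMap ∘ₗ
          TensorProduct.map Q.counit.toLinearMap LinearMap.id) phiL =
      (1 : G ⊗[ℂ] M)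
  counit_phiL_left :
    (TensorProduct.lid ℂ (G ⊗[ℂ] M))
        (TensorProduct.map Q.counit.toLinearMap LinearMap.id phiL) =
      (1 : G ⊗[ℂ] M)

variable {G M : Type*} [Ring G] [Algebra ℂ G] [Ring M] [Algebra ℂ M]

/-- The element `p_λ = φ_λ² S⁻¹(φ_λ¹ β) ⊗ φ_λ³ ∈ G ⊗ M`. -/
def pLam (Q : QuasiHopf G) (L : LeftQCoaction G M Q.toQuasiBialg) : G ⊗[ℂ] M :=
  TensorProduct.map
    (LinearMap.mul' ℂ G ∘ₗ
      TensorProduct.map LinearMap.id (Q.Sinv ∘ₗ LinearMap.mulRight ℂ Q.betaEl) ∘ₗ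
      (TensorProduct.comm ℂ G G).toLinearMap)
    LinearMap.id ((TensorProduct.assoc ℂ G G M).symm L.phiL)

/-- The element `q_λ = S(φ̄_λ¹) α φ̄_λ² ⊗ φ̄_λ³ ∈ G ⊗ M`. -/
def qLam (Q : QuasiHopf G) (L : LeftQCoaction G M Q.toQuasiBialg) : G ⊗[ℂ] M :=
  TensorProduct.map
    (LinearMap.mul' ℂ G ∘ₗ
      TensorProduct.map (LinearMap.mulRight ℂ Q.alphaEl ∘ₗ Q.S) LinearMap.id)
    LinearMap.id ((TensorProduct.assoc ℂ G G M).symm L.phiLInv)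

/-- For `x ⊗ n ∈ G ⊗ M`, the element `λ(n)·t·(S⁻¹(x) ⊗ 1_M) ∈ G ⊗ M` (summation extended
bilinearly); used to express `λ(m₍₀₎)·p_λ·(S⁻¹(m₍₋₁₎) ⊗ 1_M)`. -/
def thetaP (Q : QuasiHopf G) (L : LeftQCoaction G M Q.toQuasiBialg) (t : G ⊗[ℂ] M) :
    G ⊗[ℂ] M →ₗ[ℂ] G ⊗[ℂ] M :=
  TensorProduct.lift (LinearMap.mul ℂ (G ⊗[ℂ] M) ∘ₗ LinearMap.mulRight ℂ t) ∘ₗ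
    TensorProduct.map L.lam.toLinearMap
      ((TensorProduct.mk ℂ G M).flip (1 : M) ∘ₗ Q.Sinv) ∘ₗ
    (TensorProduct.comm ℂ G M).toLinearMap

/-- For `x ⊗ n ∈ G ⊗ M`, the element `(S(x) ⊗ 1_M)·t·λ(n) ∈ G ⊗ M` (summation extended
bilinearly); used to express `(S(m₍₋₁₎) ⊗ 1_M)·q_λ·λ(m₍₀₎)`. -/
def thetaQ (Q : QuasiHopf G) (L : LeftQCoaction G M Q.toQuasiBialg) (t : G ⊗[ℂ] M) :
    G ⊗[ℂ] M →ₗ[ℂ] G ⊗[ℂ] M :=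
  TensorProduct.lift (LinearMap.mul ℂ (G ⊗[ℂ] M) ∘ₗ LinearMap.mulRight ℂ t) ∘ₗ
    TensorProduct.map ((TensorProduct.mk ℂ G M).flip (1 : M) ∘ₗ Q.S) L.lam.toLinearMap


namespace Statement15Aux

set_option synthInstance.maxHeartbeats 1000000

variable (Q : QuasiHopf G) (L : LeftQCoaction G M Q.toQuasiBialg)

/-- `a ⊗ b ⊗ c ↦ (S a * α * b) ⊗ c`. -/
def fQ : G ⊗[ℂ] (G ⊗[ℂ] M) →ₗ[ℂ] G ⊗[ℂ] M :=
  TensorProduct.map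
    (LinearMap.mul' ℂ G ∘ₗ
      TensorProduct.map (LinearMap.mulRight ℂ Q.alphaEl ∘ₗ Q.S) LinearMap.id)
    LinearMap.id ∘ₗ (TensorProduct.assoc ℂ G G M).symm.toLinearMap

/-- `a ⊗ b ⊗ c ↦ (b * S⁻¹(a β)) ⊗ c`. -/
def fP : G ⊗[ℂ] (G ⊗[ℂ] M) →ₗ[ℂ] G ⊗[ℂ] M :=
  TensorProduct.map
    (LinearMap.mul' ℂ G ∘ₗ
      TensorProduct.map LinearMap.id (Q.Sinv ∘ₗ LinearMap.mulRight ℂ Q.betaEl) ∘ₗ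
      (TensorProduct.comm ℂ G G).toLinearMap)
    LinearMap.id ∘ₗ (TensorProduct.assoc ℂ G G M).symm.toLinearMap

lemma fQ_tmul (a b : G) (c : M) :
    fQ Q (a ⊗ₜ[ℂ] (b ⊗ₜ[ℂ] c)) = (Q.S a * Q.alphaEl * b) ⊗ₜ[ℂ] c := by
  simp [fQ]

lemma fP_tmul (a b : G) (c : M) :
    fP Q (a ⊗ₜ[ℂ] (b ⊗ₜ[ℂ] c)) = (b * Q.Sinv (a * Q.betaEl)) ⊗ₜ[ℂ] c := by
  simp [fP]

lemma qLam_eq : qLam Q L = fQ Q L.phiLInv := rfl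

lemma pLam_eq : pLam Q L = fP Q L.phiL := rfl

lemma Sinv_mul (a b : G) : Q.Sinv (a * b) = Q.Sinv b * Q.Sinv a := by
  conv_lhs => rw [← Q.S_Sinv a, ← Q.S_Sinv b, ← Q.S_mul, Q.Sinv_S]

lemma thetaQ_tmul (t : G ⊗[ℂ] M) (x : G) (n : M) :
    thetaQ Q L t (x ⊗ₜ[ℂ] n) = (Q.S x ⊗ₜ[ℂ] (1 : M)) * t * L.lam n := by
  simp [thetaQ]

lemma thetaP_tmul (t : G ⊗[ℂ] M) (x : G) (n : M) :
    thetaP Q L t (x ⊗ₜ[ℂ] n) = L.lam n * t * (Q.Sinv x ⊗ₜ[ℂ] (1 : M)) := by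
  simp [thetaP]

lemma fQ_aux (a x : G) (v w : G ⊗[ℂ] M) :
    fQ Q ((a * x) ⊗ₜ[ℂ] (v * w)) = (Q.S x ⊗ₜ[ℂ] (1 : M)) * fQ Q (a ⊗ₜ[ℂ] v) * w := by
  induction v using TensorProduct.induction_on with
  | zero => simp
  | add v₁ v₂ h₁ h₂ => simp [add_mul, mul_add, tmul_add, h₁, h₂]
  | tmul b c =>
    induction w using TensorProduct.induction_on with
    | zero => simp
    | add w₁ w₂ h₁ h₂ => simp [add_mul, mul_add, tmul_add, h₁, h₂]
    | tmul y k =>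
      simp only [Algebra.TensorProduct.tmul_mul_tmul, fQ_tmul, Q.S_mul, one_mul, mul_one]
      congr 1
      simp [mul_assoc]

lemma fP_aux (a x : G) (v w : G ⊗[ℂ] M) :
    fP Q ((x * a) ⊗ₜ[ℂ] (w * v)) = w * fP Q (a ⊗ₜ[ℂ] v) * (Q.Sinv x ⊗ₜ[ℂ] (1 : M)) := by
  induction v using TensorProduct.induction_on with
  | zero => simp
  | add v₁ v₂ h₁ h₂ => simp [add_mul, mul_add, tmul_add, h₁, h₂]
  | tmul b c =>
    induction w using TensorProduct.induction_on with
    | zero => simp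
    | add w₁ w₂ h₁ h₂ => simp [add_mul, mul_add, tmul_add, h₁, h₂]
    | tmul y k =>
      simp only [Algebra.TensorProduct.tmul_mul_tmul, fP_tmul, one_mul, mul_one]
      congr 1
      rw [show x * a * Q.betaEl = x * (a * Q.betaEl) by rw [mul_assoc], Sinv_mul]
      simp [mul_assoc]

lemma thetaQ_eq (u : G ⊗[ℂ] (G ⊗[ℂ] M)) (z : G ⊗[ℂ] M) :
    thetaQ Q L (fQ Q u) z =
      fQ Q (u * TensorProduct.map LinearMap.id L.lam.toLinearMap z) := by
  induction z using TensorProduct.induction_on with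
  | zero => simp
  | add z₁ z₂ h₁ h₂ => simp [mul_add, h₁, h₂]
  | tmul x n =>
    rw [thetaQ_tmul]
    induction u using TensorProduct.induction_on with
    | zero => simp
    | add u₁ u₂ h₁ h₂ => simp only [map_add, add_mul, mul_add, h₁, h₂]
    | tmul a v =>
      simp only [TensorProduct.map_tmul, LinearMap.id_coe, id_eq,
        Algebra.TensorProduct.tmul_mul_tmul, AlgHom.toLinearMap_apply]
      rw [fQ_aux]

lemma thetaP_eq (u : G ⊗[ℂ] (G ⊗[ℂ] M)) (z : G ⊗[ℂ] M) :
    thetaP Q L (fP Q u) z =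
      fP Q (TensorProduct.map LinearMap.id L.lam.toLinearMap z * u) := by
  induction z using TensorProduct.induction_on with
  | zero => simp
  | add z₁ z₂ h₁ h₂ => simp [add_mul, h₁, h₂]
  | tmul x n =>
    rw [thetaP_tmul]
    induction u using TensorProduct.induction_on with
    | zero => simp
    | add u₁ u₂ h₁ h₂ => simp only [map_add, add_mul, mul_add, h₁, h₂]
    | tmul a v =>
      simp only [TensorProduct.map_tmul, LinearMap.id_coe, id_eq,
        Algebra.TensorProduct.tmul_mul_tmul, AlgHom.toLinearMap_apply]
      rw [fP_aux]

lemma fQ_assoc_mul (w : G ⊗[ℂ] G) (n : M) (a b : G) (c : M) :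
    fQ Q ((TensorProduct.assoc ℂ G G M) (w ⊗ₜ[ℂ] n) * (a ⊗ₜ[ℂ] (b ⊗ₜ[ℂ] c))) =
      (Q.S a *
          LinearMap.mul' ℂ G
            (TensorProduct.map (LinearMap.mulRight ℂ Q.alphaEl ∘ₗ Q.S) LinearMap.id w) *
          b) ⊗ₜ[ℂ] (n * c) := by
  induction w using TensorProduct.induction_on with
  | zero => simp
  | add w₁ w₂ h₁ h₂ => simp only [map_add, add_tmul, add_mul, mul_add, h₁, h₂, tmul_add]
  | tmul x₁ x₂ =>
    simp only [TensorProduct.assoc_tmul, Algebra.TensorProduct.tmul_mul_tmul, fQ_tmul,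
      TensorProduct.map_tmul, LinearMap.mul'_apply, LinearMap.comp_apply,
      LinearMap.mulRight_apply, LinearMap.id_coe, id_eq, Q.S_mul]
    congr 1
    simp [mul_assoc]

/-- The map `x₁ ⊗ x₂ ↦ x₂ * S⁻¹(x₁ β)` equals `S⁻¹` applied to `x₁ ⊗ x₂ ↦ x₁ β S(x₂)`. -/
lemma gP_eq (w : G ⊗[ℂ] G) :
    LinearMap.mul' ℂ G
        ((TensorProduct.map LinearMap.id (Q.Sinv ∘ₗ LinearMap.mulRight ℂ Q.betaEl) ∘ₗ
          (TensorProduct.comm ℂ G G).toLinearMap) w) =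
      Q.Sinv (LinearMap.mul' ℂ G
        (TensorProduct.map (LinearMap.mulRight ℂ Q.betaEl) Q.S w)) := by
  induction w using TensorProduct.induction_on with
  | zero => simp
  | add w₁ w₂ h₁ h₂ => simp only [map_add, h₁, h₂]
  | tmul x₁ x₂ =>
    simp only [LinearMap.comp_apply, LinearEquiv.coe_coe, TensorProduct.comm_tmul,
      TensorProduct.map_tmul, LinearMap.mul'_apply, LinearMap.mulRight_apply,
      LinearMap.id_coe, id_eq, Sinv_mul, Q.Sinv_S]

lemma fP_assoc_mul (w : G ⊗[ℂ] G) (n : M) (a b : G) (c : M) :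
    fP Q ((a ⊗ₜ[ℂ] (b ⊗ₜ[ℂ] c)) * (TensorProduct.assoc ℂ G G M) (w ⊗ₜ[ℂ] n)) =
      (b *
          LinearMap.mul' ℂ G
            ((TensorProduct.map LinearMap.id (Q.Sinv ∘ₗ LinearMap.mulRight ℂ Q.betaEl) ∘ₗ
              (TensorProduct.comm ℂ G G).toLinearMap) w) *
          Q.Sinv a) ⊗ₜ[ℂ] (c * n) := by
  induction w using TensorProduct.induction_on with
  | zero => simp
  | add w₁ w₂ h₁ h₂ => simp only [map_add, add_tmul, add_mul, mul_add, h₁, h₂, tmul_add]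
  | tmul x₁ x₂ =>
    simp only [TensorProduct.assoc_tmul, Algebra.TensorProduct.tmul_mul_tmul, fP_tmul,
      TensorProduct.map_tmul, LinearMap.mul'_apply, LinearMap.comp_apply,
      LinearMap.mulRight_apply, LinearMap.id_coe, id_eq, LinearEquiv.coe_coe,
      TensorProduct.comm_tmul]
    congr 1
    rw [show a * x₁ * Q.betaEl = a * (x₁ * Q.betaEl) by rw [mul_assoc], Sinv_mul]
    simp [mul_assoc]

lemma fQ_D_mul (z : G ⊗[ℂ] M) (u : G ⊗[ℂ] (G ⊗[ℂ] M)) :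
    fQ Q ((TensorProduct.assoc ℂ G G M)
        (TensorProduct.map Q.comul.toLinearMap LinearMap.id z) * u) =
      ((1 : G) ⊗ₜ[ℂ]
          (TensorProduct.lid ℂ M)
            (TensorProduct.map Q.counit.toLinearMap LinearMap.id z)) * fQ Q u := by
  induction z using TensorProduct.induction_on with
  | zero => simp
  | add z₁ z₂ h₁ h₂ => simp only [map_add, add_mul, h₁, h₂, tmul_add]
  | tmul x n =>
    induction u using TensorProduct.induction_on with
    | zero => simp
    | add u₁ u₂ h₁ h₂ => simp only [map_add, add_mul, mul_add, h₁, h₂]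
    | tmul a v =>
      induction v using TensorProduct.induction_on with
      | zero => simp
      | add v₁ v₂ h₁ h₂ => simp only [tmul_add, map_add, mul_add, h₁, h₂]
      | tmul b c =>
        simp only [TensorProduct.map_tmul, LinearMap.id_coe, id_eq, AlgHom.toLinearMap_apply,
          TensorProduct.lid_tmul]
        rw [fQ_assoc_mul, Q.antipode_left, fQ_tmul]
        simp only [Algebra.TensorProduct.tmul_mul_tmul, one_mul]
        simp [mul_smul_comm, smul_mul_assoc, tmul_smul, smul_tmul']

lemma fP_D_mul (z : G ⊗[ℂ] M) (u : G ⊗[ℂ] (G ⊗[ℂ] M)) :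
    fP Q (u * (TensorProduct.assoc ℂ G G M)
        (TensorProduct.map Q.comul.toLinearMap LinearMap.id z)) =
      fP Q u * ((1 : G) ⊗ₜ[ℂ]
          (TensorProduct.lid ℂ M)
            (TensorProduct.map Q.counit.toLinearMap LinearMap.id z)) := by
  induction z using TensorProduct.induction_on with
  | zero => simp
  | add z₁ z₂ h₁ h₂ => simp only [map_add, mul_add, h₁, h₂, tmul_add]
  | tmul x n =>
    induction u using TensorProduct.induction_on with
    | zero => simp
    | add u₁ u₂ h₁ h₂ => simp only [map_add, add_mul, mul_add, h₁, h₂]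
    | tmul a v =>
      induction v using TensorProduct.induction_on with
      | zero => simp
      | add v₁ v₂ h₁ h₂ => simp only [tmul_add, map_add, add_mul, h₁, h₂]
      | tmul b c =>
        simp only [TensorProduct.map_tmul, LinearMap.id_coe, id_eq, AlgHom.toLinearMap_apply,
          TensorProduct.lid_tmul]
        rw [fP_assoc_mul, gP_eq, Q.antipode_right, fP_tmul]
        simp only [Algebra.TensorProduct.tmul_mul_tmul, mul_one, map_smul]
        simp [Sinv_mul, mul_smul_comm, smul_mul_assoc, tmul_smul, smul_tmul', mul_assoc]

lemma inv_intertwine (m : M) :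
    L.phiLInv * TensorProduct.map LinearMap.id L.lam.toLinearMap (L.lam m) =
      (TensorProduct.assoc ℂ G G M)
          (TensorProduct.map Q.comul.toLinearMap LinearMap.id (L.lam m)) * L.phiLInv := by
  have h := L.intertwine m
  calc L.phiLInv * TensorProduct.map LinearMap.id L.lam.toLinearMap (L.lam m)
      = L.phiLInv * TensorProduct.map LinearMap.id L.lam.toLinearMap (L.lam m) *
        (L.phiL * L.phiLInv) := by rw [L.phiL_mul_inv, mul_one]
    _ = L.phiLInv * (TensorProduct.map LinearMap.id L.lam.toLinearMap (L.lam m) * L.phiL) *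
        L.phiLInv := by rw [mul_assoc, mul_assoc, mul_assoc]
    _ = L.phiLInv * (L.phiL * (TensorProduct.assoc ℂ G G M)
        (TensorProduct.map Q.comul.toLinearMap LinearMap.id (L.lam m))) * L.phiLInv := by
        rw [h]
    _ = (L.phiLInv * L.phiL) * (TensorProduct.assoc ℂ G G M)
        (TensorProduct.map Q.comul.toLinearMap LinearMap.id (L.lam m)) * L.phiLInv := by
        simp only [mul_assoc]
    _ = _ := by rw [L.phiL_inv_mul, one_mul]

end Statement15Aux

/-- Let `(λ, φ_λ)` be a left coaction of a quasi-Hopf algebra `G` on `M`,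
and let `p_λ = φ_λ² S⁻¹(φ_λ¹ β) ⊗ φ_λ³`, `q_λ = S(φ̄_λ¹) α φ̄_λ² ⊗ φ̄_λ³`.  Then for all
`m ∈ M` (with `λ(m) = m₍₋₁₎ ⊗ m₍₀₎`):
`λ(m₍₀₎)·p_λ·(S⁻¹(m₍₋₁₎) ⊗ 1_M) = p_λ·(1_G ⊗ m)` and
`(S(m₍₋₁₎) ⊗ 1_M)·q_λ·λ(m₍₀₎) = (1_G ⊗ m)·q_λ`. -/
theorem statement15
    (Q : QuasiHopf G) (L : LeftQCoaction G M Q.toQuasiBialg) :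
    (∀ m : M, thetaP Q L (pLam Q L) (L.lam m) = pLam Q L * ((1 : G) ⊗ₜ[ℂ] m)) ∧
    (∀ m : M, thetaQ Q L (qLam Q L) (L.lam m) = ((1 : G) ⊗ₜ[ℂ] m) * qLam Q L) := by
  constructor
  · intro m
    rw [Statement15Aux.pLam_eq, Statement15Aux.thetaP_eq, L.intertwine m,
      Statement15Aux.fP_D_mul, L.counit_lam m]
  · intro m
    rw [Statement15Aux.qLam_eq, Statement15Aux.thetaQ_eq, Statement15Aux.inv_intertwine,
      Statement15Aux.fQ_D_mul, L.counit_lam m]
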